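/- arXiv:0805.0826 — 3 statements merged into one kernel-verified Lean document; each statement's English description precedes it below -/
import Mathlib

section
/- Let s > 0 and let P satisfy H1 and H2, and suppose P_∞ := lim_{x→∞} P(x) < ∞ (P is bounded). Set γ_∞ = (√(1 + 4·P_∞) − 1)/2. Then there exists a positive solution γ of the Dyson–Schwinger ODE on (0, ∞) which is bounded, indeed satisfying γ_c(x) < γ(x) ≤ γ_∞ for all x > 0; moreover this bounded global positive solution is unique: any two bounded positive solutions on (0, ∞) coincide. -/
open Real MeasureTheory Filter Set

noncomputable section

/-- `γ` is a positive solution of the Dyson–Schwinger ODE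
`γ'(x) = (γ(x) + γ(x)² − P(x)) / (s·x·γ(x))` on the set `I`. -/
def IsDSSolution (s : ℝ) (P γ : ℝ → ℝ) (I : Set ℝ) : Prop :=
  (∀ x ∈ I, 0 < γ x) ∧
    ∀ x ∈ I, HasDerivWithinAt γ ((γ x + (γ x) ^ 2 - P x) / (s * x * γ x)) I x

/-- Hypothesis H1: `P` is twice continuously differentiable on `[0,∞)`,
`P 0 = 0`, and `P x > 0` for `x > 0`. -/
def H1 (P : ℝ → ℝ) : Prop :=
  ContDiffOn ℝ 2 P (Set.Ici 0) ∧ P 0 = 0 ∧ ∀ x > (0 : ℝ), 0 < P x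

/-- Hypothesis H2: `P` is strictly increasing on `[0,∞)`. -/
def H2 (P : ℝ → ℝ) : Prop := StrictMonoOn P (Set.Ici 0)

/-- The nullcline `γ_c(x) = (√(1 + 4 P x) − 1)/2`. -/
def gammaC (P : ℝ → ℝ) (x : ℝ) : ℝ := (Real.sqrt (1 + 4 * P x) - 1) / 2

/-! Auxiliary definitions -/

def vf (s : ℝ) (P : ℝ → ℝ) (t y : ℝ) : ℝ := (y + y ^ 2 - P t) / (s * t * y)

def gInf (Pinf : ℝ) : ℝ := (Real.sqrt (1 + 4 * Pinf) - 1) / 2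

section Basics

variable {s : ℝ} {P : ℝ → ℝ} {Pinf : ℝ}

lemma hP_nonneg (hP1 : H1 P) (hP2 : H2 P) {x : ℝ} (hx : 0 ≤ x) : 0 ≤ P x := by
  rcases eq_or_lt_of_le hx with h | h
  · rw [← h, hP1.2.1]
  · exact (hP1.2.2 x h).le

lemma hP_le (hP2 : H2 P) (hlim : Tendsto P atTop (nhds Pinf)) {x : ℝ} (hx : 0 ≤ x) :
    P x ≤ Pinf := by
  refine ge_of_tendsto hlim ?_
  filter_upwards [eventually_ge_atTop x] with y hy
  rcases eq_or_lt_of_le hy with h | h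
  · rw [h]
  · exact (hP2 (mem_Ici.mpr hx) (mem_Ici.mpr (hx.trans hy)) h).le

lemma hP_lt (hP2 : H2 P) (hlim : Tendsto P atTop (nhds Pinf)) {x : ℝ} (hx : 0 ≤ x) :
    P x < Pinf := by
  have h1 : P x < P (x + 1) := hP2 (mem_Ici.mpr hx) (mem_Ici.mpr (by linarith)) (by linarith)
  exact h1.trans_le (hP_le hP2 hlim (by linarith))

lemma hPinf_pos (hP1 : H1 P) (hP2 : H2 P) (hlim : Tendsto P atTop (nhds Pinf)) : 0 < Pinf :=
  (hP1.2.2 1 one_pos).trans_le (hP_le hP2 hlim zero_le_one)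

/-- `gammaC` basic: identity `gc + gc² = P`. -/
lemma gammaC_identity {x : ℝ} (hx : 0 ≤ 1 + 4 * P x) :
    gammaC P x + (gammaC P x) ^ 2 = P x := by
  have h := Real.sq_sqrt hx
  unfold gammaC
  nlinarith [h]

lemma gInf_identity (hP1 : H1 P) (hP2 : H2 P) (hlim : Tendsto P atTop (nhds Pinf)) :
    gInf Pinf + (gInf Pinf) ^ 2 = Pinf := by
  have h0 : (0:ℝ) ≤ 1 + 4 * Pinf := by nlinarith [hPinf_pos hP1 hP2 hlim]
  have h := Real.sq_sqrt h0
  unfold gInf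
  nlinarith [h]

lemma gammaC_nonneg (hP1 : H1 P) (hP2 : H2 P) {x : ℝ} (hx : 0 ≤ x) : 0 ≤ gammaC P x := by
  have h : (1:ℝ) ≤ 1 + 4 * P x := by nlinarith [hP_nonneg hP1 hP2 hx]
  have : (1:ℝ) ≤ Real.sqrt (1 + 4 * P x) :=
    (Real.le_sqrt (by norm_num) (by linarith)).mpr (by nlinarith)
  unfold gammaC; linarith

lemma gammaC_pos (hP1 : H1 P) {x : ℝ} (hx : 0 < x) : 0 < gammaC P x := by
  have hp := hP1.2.2 x hx
  have h : (1:ℝ) < Real.sqrt (1 + 4 * P x) := by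
    rw [Real.lt_sqrt (by norm_num : (0:ℝ) ≤ 1)]
    nlinarith
  unfold gammaC; linarith

lemma gInf_pos (hP1 : H1 P) (hP2 : H2 P) (hlim : Tendsto P atTop (nhds Pinf)) : 0 < gInf Pinf := by
  have hp := hPinf_pos hP1 hP2 hlim
  have h : (1:ℝ) < Real.sqrt (1 + 4 * Pinf) := by
    rw [Real.lt_sqrt (by norm_num : (0:ℝ) ≤ 1)]
    nlinarith
  unfold gInf; linarith

lemma gammaC_strictMono (hP1 : H1 P) (hP2 : H2 P) : StrictMonoOn (gammaC P) (Ici 0) := by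
  intro x hx y hy hxy
  have h1 : 0 ≤ 1 + 4 * P x := by nlinarith [hP_nonneg hP1 hP2 (mem_Ici.mp hx)]
  have h2 : P x < P y := hP2 hx hy hxy
  have := Real.sqrt_lt_sqrt h1 (by linarith : 1 + 4 * P x < 1 + 4 * P y)
  unfold gammaC; linarith

lemma gammaC_mono (hP1 : H1 P) (hP2 : H2 P) : MonotoneOn (gammaC P) (Ici 0) :=
  (gammaC_strictMono hP1 hP2).monotoneOn

lemma gammaC_lt_gInf (hP1 : H1 P) (hP2 : H2 P) (hlim : Tendsto P atTop (nhds Pinf))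
    {x : ℝ} (hx : 0 ≤ x) : gammaC P x < gInf Pinf := by
  have h1 : 0 ≤ 1 + 4 * P x := by nlinarith [hP_nonneg hP1 hP2 hx]
  have h2 : P x < Pinf := hP_lt hP2 hlim hx
  have := Real.sqrt_lt_sqrt h1 (by linarith : 1 + 4 * P x < 1 + 4 * Pinf)
  unfold gammaC gInf; linarith

/-- derivative of `P` at interior points. -/
lemma hP_hasDerivAt (hP1 : H1 P) {x : ℝ} (hx : 0 < x) : HasDerivAt P (deriv P x) x := by
  have hd : DifferentiableOn ℝ P (Ici 0) := hP1.1.differentiableOn (by norm_num)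
  have hmem : Ici (0:ℝ) ∈ nhds x := mem_of_superset (Ioi_mem_nhds hx) Ioi_subset_Ici_self
  exact (hd.differentiableAt hmem).hasDerivAt

lemma hP_deriv_nonneg (hP1 : H1 P) (hP2 : H2 P) {x : ℝ} (hx : 0 < x) : 0 ≤ deriv P x := by
  have hd := (hP_hasDerivAt hP1 hx).hasDerivWithinAt (s := Ioi x)
  rw [hasDerivWithinAt_iff_tendsto_slope] at hd
  have hne : (Ioi x \ {x}) = Ioi x := by
    ext y; simp only [mem_diff, mem_Ioi, mem_singleton_iff]
    exact ⟨fun h => h.1, fun h => ⟨h, ne_of_gt h⟩⟩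
  rw [hne] at hd
  refine ge_of_tendsto hd ?_
  filter_upwards [self_mem_nhdsWithin] with y hy
  have hxy : x < y := hy
  have hle : P x ≤ P y := (hP2 (mem_Ici.mpr hx.le) (mem_Ici.mpr (by linarith)) hxy).le
  rw [slope_def_field]
  exact div_nonneg (by linarith) (by linarith)

lemma gammaC_hasDerivAt (hP1 : H1 P) (hP2 : H2 P) {x : ℝ} (hx : 0 < x) :
    HasDerivAt (gammaC P) (4 * deriv P x / (2 * Real.sqrt (1 + 4 * P x)) / 2) x := by
  have h1 : (0:ℝ) < 1 + 4 * P x := by nlinarith [hP_nonneg hP1 hP2 hx.le]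
  have hu : HasDerivAt (fun y => 1 + 4 * P y) (4 * deriv P x) x := by
    simpa using ((hP_hasDerivAt hP1 hx).const_mul 4).const_add 1
  have hsq : HasDerivAt (fun y => Real.sqrt (1 + 4 * P y))
      (4 * deriv P x / (2 * Real.sqrt (1 + 4 * P x))) x := by
    simpa using hu.sqrt (ne_of_gt h1)
  unfold gammaC
  simpa [div_eq_mul_inv, mul_comm] using (hsq.sub_const 1).div_const 2

lemma gammaC_deriv_nonneg (hP1 : H1 P) (hP2 : H2 P) {x : ℝ} (hx : 0 < x) :
    0 ≤ 4 * deriv P x / (2 * Real.sqrt (1 + 4 * P x)) / 2 := by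
  have h1 : (0:ℝ) < 1 + 4 * P x := by nlinarith [hP_nonneg hP1 hP2 hx.le]
  have := hP_deriv_nonneg hP1 hP2 hx
  positivity

lemma gammaC_continuousAt (hP1 : H1 P) (hP2 : H2 P) {x : ℝ} (hx : 0 < x) :
    ContinuousAt (gammaC P) x := (gammaC_hasDerivAt hP1 hP2 hx).continuousAt

lemma hP_continuousOn (hP1 : H1 P) : ContinuousOn P (Ici 0) := hP1.1.continuousOn

/-- key algebraic identity: `y + y² - P x = (y - gc x) * (1 + y + gc x)` -/
lemma vf_numerator (hP1 : H1 P) (hP2 : H2 P) {x y : ℝ} (hx : 0 ≤ x) :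
    y + y ^ 2 - P x = (y - gammaC P x) * (1 + y + gammaC P x) := by
  have h := gammaC_identity (P := P) (x := x) (by nlinarith [hP_nonneg hP1 hP2 hx])
  ring_nf
  nlinarith [h]

end Basics

section Core

variable {s : ℝ} {P : ℝ → ℝ} {Pinf : ℝ}

/-- transfer derivative within `Icc a b` to within `Iic t` for `t ∈ Ioc a b`. -/
lemma iic_of_icc {f : ℝ → ℝ} {d a b t : ℝ} (h : HasDerivWithinAt f d (Icc a b) t)
    (ht : t ∈ Ioc a b) : HasDerivWithinAt f d (Iic t) t := by
  refine h.mono_of_mem_nhdsWithin ?_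
  refine mem_nhdsWithin.mpr ⟨Ioo a (b + 1), isOpen_Ioo, ⟨ht.1, by linarith [ht.2]⟩, ?_⟩
  rintro y ⟨⟨hy1, _⟩, hy2⟩
  exact ⟨hy1.le, le_trans hy2 ht.2⟩

lemma vf_sub {μ w w' : ℝ} (hμ : s * μ ≠ 0) (hw : w ≠ 0) (hw' : w' ≠ 0) :
    vf s P μ w - vf s P μ w' = (w - w') * (w * w' + P μ) / (s * μ * w * w') := by
  unfold vf
  field_simp
  ring

/-- Lipschitz constant for the field on the strip. -/
lemma vf_lipschitz (hs : 0 < s) (hP1 : H1 P) (hP2 : H2 P) (hlim : Tendsto P atTop (nhds Pinf))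
    {a : ℝ} (ha : 0 < a) (t : ℝ) :
    LipschitzOnWith (Real.toNNReal (((gInf Pinf) ^ 2 + Pinf) / (s * a * (gammaC P a) ^ 2)))
      (fun y => vf s P (max t a) y) (Icc (gammaC P a) (gInf Pinf)) := by
  have hm : 0 < gammaC P a := gammaC_pos hP1 ha
  have hPinf : 0 < Pinf := hPinf_pos hP1 hP2 hlim
  have hM : 0 < gInf Pinf := gInf_pos hP1 hP2 hlim
  rw [lipschitzOnWith_iff_dist_le_mul]
  intro y hy z hz
  have hμ : a ≤ max t a := le_max_right t a
  have hμ0 : 0 < max t a := lt_of_lt_of_le ha hμ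
  have hy0 : 0 < y := lt_of_lt_of_le hm hy.1
  have hz0 : 0 < z := lt_of_lt_of_le hm hz.1
  have hP0 : 0 ≤ P (max t a) := hP_nonneg hP1 hP2 hμ0.le
  have hPle : P (max t a) ≤ Pinf := hP_le hP2 hlim hμ0.le
  rw [Real.dist_eq, Real.dist_eq, vf_sub (by positivity) (ne_of_gt hy0) (ne_of_gt hz0)]
  rw [Real.coe_toNNReal _ (by positivity)]
  rw [abs_div, abs_mul]
  have hden : |s * max t a * y * z| = s * max t a * y * z := abs_of_pos (by positivity)
  rw [hden]
  have hnum : |y * z + P (max t a)| = y * z + P (max t a) := abs_of_nonneg (by positivity)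
  rw [hnum]
  rw [div_le_iff₀ (by positivity)]
  have key : (y * z + P (max t a)) * (s * a * (gammaC P a) ^ 2)
      ≤ ((gInf Pinf) ^ 2 + Pinf) * (s * max t a * y * z) := by
    have h1 : y * z + P (max t a) ≤ (gInf Pinf) ^ 2 + Pinf := by
      have : y * z ≤ gInf Pinf * gInf Pinf :=
        mul_le_mul hy.2 hz.2 hz0.le hM.le
      nlinarith
    have h2 : s * a * (gammaC P a) ^ 2 ≤ s * max t a * y * z := by
      have hgg : gammaC P a * gammaC P a ≤ y * z := mul_le_mul hy.1 hz.1 hm.le hy0.le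
      have ha' : s * a ≤ s * max t a := by nlinarith
      have hmm := mul_le_mul ha' hgg (by positivity) (by positivity)
      nlinarith [hmm]
    nlinarith [mul_pos (mul_pos hs ha) (pow_pos hm 2),
      mul_pos (mul_pos (mul_pos hs hμ0) hy0) hz0]
  calc |y - z| * (y * z + P (max t a))
      = (y * z + P (max t a)) * |y - z| := by ring
    _ ≤ (((gInf Pinf) ^ 2 + Pinf) * (s * max t a * y * z)) / (s * a * (gammaC P a) ^ 2) * |y - z| := by
        apply mul_le_mul_of_nonneg_right _ (abs_nonneg _)
        rw [le_div_iff₀ (by positivity)]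
        linarith [key]
    _ = ((gInf Pinf) ^ 2 + Pinf) / (s * a * (gammaC P a) ^ 2) * |y - z| * (s * max t a * y * z) := by
        ring

/-- Uniqueness of strip solutions with common value at the right endpoint. -/
lemma uniq_on (hs : 0 < s) (hP1 : H1 P) (hP2 : H2 P) (hlim : Tendsto P atTop (nhds Pinf))
    {a b : ℝ} (ha : 0 < a) {f g : ℝ → ℝ}
    (hfc : ContinuousOn f (Icc a b)) (hgc : ContinuousOn g (Icc a b))
    (hfd : ∀ t ∈ Ioc a b, HasDerivWithinAt f (vf s P t (f t)) (Iic t) t)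
    (hgd : ∀ t ∈ Ioc a b, HasDerivWithinAt g (vf s P t (g t)) (Iic t) t)
    (hfs : ∀ t ∈ Ioc a b, f t ∈ Icc (gammaC P a) (gInf Pinf))
    (hgs : ∀ t ∈ Ioc a b, g t ∈ Icc (gammaC P a) (gInf Pinf))
    (hfb : f b = g b) : EqOn f g (Icc a b) := by
  apply ODE_solution_unique_of_mem_Icc_left
    (v := fun t y => vf s P (max t a) y) (s := fun _ => Icc (gammaC P a) (gInf Pinf))
    (fun t _ => vf_lipschitz hs hP1 hP2 hlim ha t) hfc ?_ hfs hgc ?_ hgs hfb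
  · intro t ht
    simpa only [max_eq_left ht.1.le] using hfd t ht
  · intro t ht
    simpa only [max_eq_left ht.1.le] using hgd t ht

end Core

section SolExists

variable {s : ℝ} {P : ℝ → ℝ} {Pinf : ℝ}

set_option maxHeartbeats 1000000 in
lemma sol_exists (hs : 0 < s) (hP1 : H1 P) (hP2 : H2 P) (hlim : Tendsto P atTop (nhds Pinf))
    {ε b : ℝ} (hε : 0 < ε) (hεb : ε ≤ b) :
    ∃ f : ℝ → ℝ, f b = gammaC P b ∧ (∀ t ∈ Icc ε b, gammaC P t ≤ f t ∧ f t ≤ gInf Pinf) ∧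
      ∀ t ∈ Icc ε b, HasDerivWithinAt f (vf s P t (f t)) (Icc ε b) t := by
  have hm : 0 < gammaC P ε := gammaC_pos hP1 hε
  have hM : 0 < gInf Pinf := gInf_pos hP1 hP2 hlim
  have hmM : gammaC P ε < gInf Pinf := gammaC_lt_gInf hP1 hP2 hlim hε.le
  have hPinf : 0 < Pinf := hPinf_pos hP1 hP2 hlim
  set m : ℝ := gammaC P ε with hmdef
  set M : ℝ := gInf Pinf with hMdef
  set cl : ℝ → ℝ := fun y => max m (min y M) with hcl
  have hcl_mem : ∀ y, m ≤ cl y ∧ cl y ≤ M := fun y =>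
    ⟨le_max_left _ _, max_le hmM.le (min_le_right y M)⟩
  have hcl_id : ∀ y, m ≤ y → y ≤ M → cl y = y := by
    intro y h1 h2
    rw [hcl]
    simp only [min_eq_left h2, max_eq_right h1]
  have hcl_lip : ∀ y z, |cl y - cl z| ≤ |y - z| := by
    intro y z
    rw [hcl]
    simp only
    rw [max_comm m (min y M), max_comm m (min z M)]
    refine le_trans (abs_max_sub_max_le_abs _ _ _) ?_
    refine le_trans (abs_min_sub_min_le_max _ _ _ _) ?_
    simp
  set F : ℝ → ℝ → ℝ := fun t y => vf s P t (cl y) with hF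
  set C : ℝ := (M + M ^ 2 + Pinf) / (s * ε * m) with hC
  have hCpos : 0 < C := by rw [hC]; positivity
  set R : ℝ := C * (b - ε) + 1 with hR
  set K : NNReal := Real.toNNReal ((M ^ 2 + Pinf) / (s * ε * m ^ 2)) with hK
  set x₀ : ℝ := gammaC P b with hx₀
  have hIccIci : Icc ε b ⊆ Ici (0:ℝ) := fun t ht => le_trans hε.le ht.1
  -- bounds on P on [ε,b]
  have hPb : ∀ t ∈ Icc ε b, 0 ≤ P t ∧ P t ≤ Pinf := fun t ht =>
    ⟨hP_nonneg hP1 hP2 (hIccIci ht), hP_le hP2 hlim (hIccIci ht)⟩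
  have hR0 : (0:ℝ) ≤ R := by
    rw [hR]; nlinarith [mul_nonneg hCpos.le (by linarith : (0:ℝ) ≤ b - ε)]
  have hpl : IsPicardLindelof F (tmin := ε) (tmax := b) ⟨b, hεb, le_refl b⟩ x₀ ⟨R, hR0⟩ 0
      ⟨C, hCpos.le⟩ K := by
    refine ⟨?_, ?_, ?_, ?_⟩
    · -- lipschitz
      intro t ht
      apply LipschitzWith.lipschitzOnWith
      rw [lipschitzWith_iff_dist_le_mul]
      intro y z
      have hlip := vf_lipschitz hs hP1 hP2 hlim hε t
      rw [lipschitzOnWith_iff_dist_le_mul] at hlip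
      have h1 := hlip (cl y) ⟨(hcl_mem y).1, (hcl_mem y).2⟩ (cl z) ⟨(hcl_mem z).1, (hcl_mem z).2⟩
      rw [max_eq_left ht.1] at h1
      calc dist (F t y) (F t z) ≤ (K : ℝ) * dist (cl y) (cl z) := h1
        _ ≤ (K : ℝ) * dist y z := by
            apply mul_le_mul_of_nonneg_left _ (K.coe_nonneg)
            rw [Real.dist_eq, Real.dist_eq]
            exact hcl_lip y z
    · -- continuity in t
      intro y _
      have hd : ∀ t ∈ Icc ε b, s * t * cl y ≠ 0 := by
        intro t ht
        have ht0 : 0 < t := lt_of_lt_of_le hε ht.1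
        have := (hcl_mem y).1
        positivity
      exact ContinuousOn.div
        ((continuousOn_const).sub ((hP_continuousOn hP1).mono hIccIci))
        (continuousOn_const.mul continuousOn_id |>.mul continuousOn_const) hd
    · -- norm bound
      intro t ht y _
      show ‖F t y‖ ≤ C
      have ht0 : 0 < t := lt_of_lt_of_le hε ht.1
      have hz1 := (hcl_mem y).1
      have hz2 := (hcl_mem y).2
      have hP0 := (hPb t ht).1
      have hPle := (hPb t ht).2
      rw [Real.norm_eq_abs, hF]
      simp only
      unfold vf
      rw [abs_div]
      have hden : |s * t * cl y| = s * t * cl y := abs_of_pos (by positivity)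
      rw [hden, hC]
      apply div_le_div₀ (by positivity)
      · rw [abs_le]
        constructor <;> nlinarith [hz1, hz2, hm, hM]
      · positivity
      · have h1 : s * ε ≤ s * t := by nlinarith [ht.1]
        nlinarith [mul_le_mul h1 hz1 hm.le (by positivity : (0:ℝ) ≤ s * t)]
    · -- C_mul_le_R
      show C * max (b - b) (b - ε) ≤ R - 0
      rw [sub_zero]
      rw [sub_self, max_eq_right (by linarith : (0:ℝ) ≤ b - ε), hR]
      linarith
  obtain ⟨f, hf0', hfd⟩ := hpl.exists_eq_forall_mem_Icc_hasDerivWithinAt₀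
  have hf0 : f b = x₀ := hf0'
  have hfc : ContinuousOn f (Icc ε b) := fun t ht => (hfd t ht).continuousWithinAt
  have hgcb : gammaC P b ≤ M := (gammaC_lt_gInf hP1 hP2 hlim (hε.le.trans hεb)).le
  -- derivative as HasDerivAt at interior points
  have hfA : ∀ x, ε < x → x < b → HasDerivAt f (F x (f x)) x := by
    intro x h1 h2
    exact (hfd x ⟨h1.le, h2.le⟩).hasDerivAt (Icc_mem_nhds h1 h2)
  -- lower invariance
  have low : ∀ t ∈ Icc ε b, gammaC P t ≤ f t := by
    by_contra hcon
    push_neg at hcon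
    obtain ⟨x1, hx1, hx1lt⟩ := hcon
    set T := {x ∈ Icc x1 b | gammaC P x ≤ f x} with hT
    have hbT : b ∈ T := ⟨⟨hx1.2, le_refl b⟩, by rw [hf0]⟩
    have hTne : T.Nonempty := ⟨b, hbT⟩
    have hTbdd : BddBelow T := ⟨x1, fun y hy => hy.1.1⟩
    set x2 := sInf T with hx2def
    have hx2mem : x2 ∈ Icc x1 b := ⟨le_csInf hTne (fun y hy => hy.1.1), csInf_le hTbdd hbT⟩
    have hx2Icc : x2 ∈ Icc ε b := ⟨hx1.1.trans hx2mem.1, hx2mem.2⟩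
    have hx2pos : 0 < x2 := lt_of_lt_of_le hε hx2Icc.1
    have hTsub : T ⊆ Icc ε b := fun y hy => ⟨hx1.1.trans hy.1.1, hy.1.2⟩
    have hx2cl : x2 ∈ closure T := csInf_mem_closure hTne hTbdd
    have hψc : ContinuousWithinAt (fun x => f x - gammaC P x) T x2 :=
      ((hfc x2 hx2Icc).sub (gammaC_continuousAt hP1 hP2 hx2pos).continuousWithinAt).mono hTsub
    have hx2T : gammaC P x2 ≤ f x2 := by
      have hne : (nhdsWithin x2 T).NeBot := mem_closure_iff_nhdsWithin_neBot.mp hx2cl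
      have hev : ∀ᶠ y in nhdsWithin x2 T, 0 ≤ f y - gammaC P y := by
        filter_upwards [self_mem_nhdsWithin] with y hy
        linarith [hy.2]
      have h0 : 0 ≤ f x2 - gammaC P x2 := ge_of_tendsto hψc hev
      linarith
    have hx1x2 : x1 < x2 := by
      rcases eq_or_lt_of_le hx2mem.1 with h | h
      · exfalso; rw [← h] at hx2T; linarith
      · exact h
    have hnotT : ∀ x ∈ Ico x1 x2, f x < gammaC P x := by
      intro x hx
      by_contra hle
      push_neg at hle
      have hxT : x ∈ T := ⟨⟨hx.1, (lt_of_lt_of_le hx.2 hx2mem.2).le⟩, hle⟩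
      exact absurd (csInf_le hTbdd hxT) (not_le.mpr hx.2)
    have hψanti : AntitoneOn (fun x => f x - gammaC P x) (Icc x1 x2) := by
      have hsub12 : Icc x1 x2 ⊆ Icc ε b := fun y hy =>
        ⟨hx1.1.trans hy.1, hy.2.trans hx2mem.2⟩
      have hderiv : ∀ x ∈ Ioo x1 x2,
          HasDerivAt (fun x => f x - gammaC P x)
            (F x (f x) - 4 * deriv P x / (2 * Real.sqrt (1 + 4 * P x)) / 2) x := by
        intro x hx
        have hxε : ε < x := lt_of_le_of_lt hx1.1 hx.1
        have hxb : x < b := lt_of_lt_of_le hx.2 hx2mem.2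
        exact (hfA x hxε hxb).sub (gammaC_hasDerivAt hP1 hP2 (hε.trans hxε))
      apply antitoneOn_of_deriv_nonpos (convex_Icc x1 x2)
      · exact (hfc.mono hsub12).sub
          (fun x hx => (gammaC_continuousAt hP1 hP2
            (lt_of_lt_of_le hε (hx1.1.trans hx.1))).continuousWithinAt)
      · rw [interior_Icc]
        exact fun x hx => ((hderiv x hx).differentiableAt).differentiableWithinAt
      · rw [interior_Icc]
        intro x hx
        rw [(hderiv x hx).deriv]
        have hxε : ε < x := lt_of_le_of_lt hx1.1 hx.1
        have hxb : x < b := lt_of_lt_of_le hx.2 hx2mem.2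
        have hx0 : 0 < x := hε.trans hxε
        have hfx : f x < gammaC P x := hnotT x ⟨hx.1.le, hx.2⟩
        have hgcM : gammaC P x < M := gammaC_lt_gInf hP1 hP2 hlim hx0.le
        have hmgc : m ≤ gammaC P x :=
          gammaC_mono hP1 hP2 (mem_Ici.mpr hε.le) (mem_Ici.mpr hx0.le) hxε.le
        have hclz : cl (f x) ≤ gammaC P x := by
          rw [hcl]
          simp only
          rw [min_eq_left (by linarith : f x ≤ M)]
          exact max_le hmgc hfx.le
        have hclz0 : 0 < cl (f x) := lt_of_lt_of_le hm (hcl_mem (f x)).1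
        have hid := gammaC_identity (P := P) (x := x)
          (by nlinarith [hP_nonneg hP1 hP2 hx0.le])
        have hsq : cl (f x) ^ 2 ≤ gammaC P x ^ 2 := pow_le_pow_left₀ hclz0.le hclz 2
        have hnum : cl (f x) + cl (f x) ^ 2 - P x ≤ 0 := by linarith only [hid, hclz, hsq]
        have hFle : F x (f x) ≤ 0 := by
          rw [hF]
          simp only
          unfold vf
          exact div_nonpos_iff.mpr (Or.inr ⟨hnum, by positivity⟩)
        have := gammaC_deriv_nonneg hP1 hP2 hx0
        linarith
    have hfinal := hψanti ⟨le_refl x1, hx1x2.le⟩ ⟨hx1x2.le, le_refl x2⟩ hx1x2.le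
    simp only at hfinal
    linarith
  -- upper invariance
  have upr : ∀ t ∈ Icc ε b, f t ≤ M := by
    by_contra hcon
    push_neg at hcon
    obtain ⟨x1, hx1, hx1gt⟩ := hcon
    set S := {x ∈ Icc x1 b | f x ≤ M} with hS
    have hbS : b ∈ S := ⟨⟨hx1.2, le_refl b⟩, by rw [hf0]; exact hgcb⟩
    have hSne : S.Nonempty := ⟨b, hbS⟩
    have hSbdd : BddBelow S := ⟨x1, fun y hy => hy.1.1⟩
    set x2 := sInf S with hx2def
    have hx2mem : x2 ∈ Icc x1 b := ⟨le_csInf hSne (fun y hy => hy.1.1), csInf_le hSbdd hbS⟩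
    have hx2Icc : x2 ∈ Icc ε b := ⟨hx1.1.trans hx2mem.1, hx2mem.2⟩
    have hSsub : S ⊆ Icc ε b := fun y hy => ⟨hx1.1.trans hy.1.1, hy.1.2⟩
    have hx2cl : x2 ∈ closure S := csInf_mem_closure hSne hSbdd
    have hx2S : f x2 ≤ M := by
      have hne : (nhdsWithin x2 S).NeBot := mem_closure_iff_nhdsWithin_neBot.mp hx2cl
      have hev : ∀ᶠ y in nhdsWithin x2 S, f y ≤ M := by
        filter_upwards [self_mem_nhdsWithin] with y hy
        exact hy.2
      exact le_of_tendsto ((hfc x2 hx2Icc).mono hSsub) hev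
    have hx1x2 : x1 < x2 := by
      rcases eq_or_lt_of_le hx2mem.1 with h | h
      · exfalso; rw [← h] at hx2S; linarith
      · exact h
    have hnotS : ∀ x ∈ Ico x1 x2, M < f x := by
      intro x hx
      by_contra hle
      push_neg at hle
      have hxS : x ∈ S := ⟨⟨hx.1, (lt_of_lt_of_le hx.2 hx2mem.2).le⟩, hle⟩
      exact absurd (csInf_le hSbdd hxS) (not_le.mpr hx.2)
    have hmono : StrictMonoOn f (Icc x1 x2) := by
      have hsub12 : Icc x1 x2 ⊆ Icc ε b := fun y hy =>
        ⟨hx1.1.trans hy.1, hy.2.trans hx2mem.2⟩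
      apply strictMonoOn_of_deriv_pos (convex_Icc x1 x2) (hfc.mono hsub12)
      rw [interior_Icc]
      intro x hx
      have hxε : ε < x := lt_of_le_of_lt hx1.1 hx.1
      have hxb : x < b := lt_of_lt_of_le hx.2 hx2mem.2
      have hx0 : 0 < x := hε.trans hxε
      rw [(hfA x hxε hxb).deriv]
      have hfx : M < f x := hnotS x ⟨hx.1.le, hx.2⟩
      have hclM : cl (f x) = M := by
        rw [hcl]
        simp only
        rw [min_eq_right hfx.le]
        exact max_eq_right hmM.le
      have hid : M + M ^ 2 = Pinf := gInf_identity hP1 hP2 hlim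
      have hPlt : P x < Pinf := hP_lt hP2 hlim hx0.le
      rw [hF]
      simp only [hclM]
      unfold vf
      apply div_pos (by linarith) (by positivity)
    have h1 := hmono ⟨le_refl x1, hx1x2.le⟩ ⟨hx1x2.le, le_refl x2⟩ hx1x2
    linarith
  refine ⟨f, hf0, fun t ht => ⟨low t ht, upr t ht⟩, fun t ht => ?_⟩
  have hd := hfd t ht
  have hmgc : m ≤ gammaC P t :=
    gammaC_mono hP1 hP2 (mem_Ici.mpr hε.le) (mem_Ici.mpr (hε.le.trans ht.1)) ht.1
  have hcleq : cl (f t) = f t := hcl_id _ (hmgc.trans (low t ht)) (upr t ht)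
  rw [hF] at hd
  simp only [hcleq] at hd
  exact hd

end SolExists

section Glob

variable {s : ℝ} {P : ℝ → ℝ} {Pinf : ℝ}

set_option maxHeartbeats 1000000 in
lemma glob (hs : 0 < s) (hP1 : H1 P) (hP2 : H2 P) (hlim : Tendsto P atTop (nhds Pinf))
    {b : ℝ} (hb : 0 < b) :
    ∃ g : ℝ → ℝ, g b = gammaC P b ∧
      (∀ x ∈ Ioc 0 b, gammaC P x ≤ g x ∧ g x ≤ gInf Pinf) ∧
      (∀ x ∈ Ioo 0 b, HasDerivAt g (vf s P x (g x)) x) ∧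
      (∀ x ∈ Ioc 0 b, HasDerivWithinAt g (vf s P x (g x)) (Iic x) x) ∧
      ContinuousOn g (Ioc 0 b) := by
  classical
  set sol : ℝ → (ℝ → ℝ) := fun ε =>
    if h : 0 < ε ∧ ε ≤ b then (sol_exists hs hP1 hP2 hlim h.1 h.2).choose else 0 with hsol
  have hspec : ∀ ε, 0 < ε → ε ≤ b →
      sol ε b = gammaC P b ∧
      (∀ t ∈ Icc ε b, gammaC P t ≤ sol ε t ∧ sol ε t ≤ gInf Pinf) ∧
      (∀ t ∈ Icc ε b, HasDerivWithinAt (sol ε) (vf s P t (sol ε t)) (Icc ε b) t) := by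
    intro ε h1 h2
    have he : sol ε = (sol_exists hs hP1 hP2 hlim h1 h2).choose := by
      rw [hsol]; simp only [dif_pos (⟨h1, h2⟩ : 0 < ε ∧ ε ≤ b)]
    rw [he]
    exact (sol_exists hs hP1 hP2 hlim h1 h2).choose_spec
  set g : ℝ → ℝ := fun x => sol x x with hg
  have agree : ∀ x0, x0 ∈ Ioc (0:ℝ) b → ∀ x ∈ Icc x0 b, g x = sol x0 x := by
    intro x0 hx0 x hx
    have hx' : x ∈ Ioc (0:ℝ) b := ⟨hx0.1.trans_le hx.1, hx.2⟩
    obtain ⟨hb1, hstrip1, hder1⟩ := hspec x hx'.1 hx'.2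
    obtain ⟨hb0, hstrip0, hder0⟩ := hspec x0 hx0.1 hx0.2
    have key : EqOn (sol x) (sol x0) (Icc x b) := by
      apply uniq_on hs hP1 hP2 hlim hx'.1
      · exact fun t ht => (hder1 t ht).continuousWithinAt
      · exact fun t ht =>
          ((hder0 t ⟨hx.1.trans ht.1, ht.2⟩).continuousWithinAt).mono
            (Icc_subset_Icc_left hx.1)
      · exact fun t ht => iic_of_icc (hder1 t ⟨ht.1.le, ht.2⟩) ht
      · exact fun t ht =>
          iic_of_icc (hder0 t ⟨hx.1.trans ht.1.le, ht.2⟩)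
            ⟨lt_of_le_of_lt hx.1 ht.1, ht.2⟩
      · intro t ht
        have h := hstrip1 t ⟨ht.1.le, ht.2⟩
        have hmono : gammaC P x ≤ gammaC P t :=
          gammaC_mono hP1 hP2 (mem_Ici.mpr hx'.1.le)
            (mem_Ici.mpr (hx'.1.le.trans ht.1.le)) ht.1.le
        exact ⟨hmono.trans h.1, h.2⟩
      · intro t ht
        have h := hstrip0 t ⟨hx.1.trans ht.1.le, ht.2⟩
        have hmono : gammaC P x ≤ gammaC P t :=
          gammaC_mono hP1 hP2 (mem_Ici.mpr hx'.1.le)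
            (mem_Ici.mpr (hx'.1.le.trans ht.1.le)) ht.1.le
        exact ⟨hmono.trans h.1, h.2⟩
      · rw [hb1, hb0]
    exact key ⟨le_refl x, hx.2⟩
  have hIicDeriv : ∀ x ∈ Ioc (0:ℝ) b, HasDerivWithinAt g (vf s P x (g x)) (Iic x) x := by
    intro x hx
    have hx1 : x / 2 ∈ Ioc (0:ℝ) b := ⟨half_pos hx.1, by linarith [hx.2, hx.1]⟩
    obtain ⟨_, _, hder⟩ := hspec (x / 2) hx1.1 hx1.2
    have hEq : EqOn g (sol (x / 2)) (Icc (x / 2) b) := fun y hy => agree (x / 2) hx1 y hy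
    have hd : HasDerivWithinAt (sol (x / 2)) (vf s P x (sol (x / 2) x)) (Iic x) x :=
      iic_of_icc (hder x ⟨by linarith [hx.1], hx.2⟩) ⟨by linarith [hx.1], hx.2⟩
    have hmem : Icc (x / 2) b ∈ nhdsWithin x (Iic x) := by
      refine mem_nhdsWithin.mpr ⟨Ioi (x / 2), isOpen_Ioi, by simp; linarith [hx.1], ?_⟩
      rintro y ⟨hy1, hy2⟩
      exact ⟨le_of_lt hy1, le_trans hy2 hx.2⟩
    have hgx : g x = sol (x / 2) x := hEq ⟨by linarith [hx.1], hx.2⟩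
    rw [hgx]
    exact hd.congr_of_eventuallyEq (Filter.eventuallyEq_of_mem hmem hEq) hgx
  have hDeriv : ∀ x ∈ Ioo (0:ℝ) b, HasDerivAt g (vf s P x (g x)) x := by
    intro x hx
    have hx1 : x / 2 ∈ Ioc (0:ℝ) b := ⟨half_pos hx.1, by linarith [hx.2, hx.1]⟩
    obtain ⟨_, _, hder⟩ := hspec (x / 2) hx1.1 hx1.2
    have hEq : EqOn g (sol (x / 2)) (Icc (x / 2) b) := fun y hy => agree (x / 2) hx1 y hy
    have hmem : Icc (x / 2) b ∈ nhds x := Icc_mem_nhds (by linarith [hx.1]) hx.2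
    have hd : HasDerivAt (sol (x / 2)) (vf s P x (sol (x / 2) x)) x :=
      (hder x ⟨by linarith [hx.1], hx.2.le⟩).hasDerivAt hmem
    have hgx : g x = sol (x / 2) x := hEq ⟨by linarith [hx.1], hx.2.le⟩
    rw [hgx]
    exact hd.congr_of_eventuallyEq (Filter.eventuallyEq_of_mem hmem hEq)
  refine ⟨g, ?_, ?_, hDeriv, hIicDeriv, ?_⟩
  · exact (hspec b hb le_rfl).1
  · intro x hx
    exact (hspec x hx.1 hx.2).2.1 x ⟨le_refl x, hx.2⟩
  · intro x hx
    rcases lt_or_eq_of_le hx.2 with h | h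
    · exact ((hDeriv x ⟨hx.1, h⟩).continuousAt).continuousWithinAt
    · subst h
      exact ((hIicDeriv x hx).continuousWithinAt).mono Ioc_subset_Iic_self

end Glob

section CompareTouch

variable {s : ℝ} {P : ℝ → ℝ} {Pinf : ℝ}

lemma compare (hs : 0 < s) (hP1 : H1 P) (hP2 : H2 P) (hlim : Tendsto P atTop (nhds Pinf))
    {a b : ℝ} (ha : 0 < a) (hab : a ≤ b) {f g : ℝ → ℝ}
    (hfc : ContinuousOn f (Icc a b)) (hgc : ContinuousOn g (Icc a b))
    (hfd : ∀ t ∈ Ioc a b, HasDerivWithinAt f (vf s P t (f t)) (Iic t) t)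
    (hgd : ∀ t ∈ Ioc a b, HasDerivWithinAt g (vf s P t (g t)) (Iic t) t)
    (hfs : ∀ t ∈ Icc a b, gammaC P t ≤ f t ∧ f t ≤ gInf Pinf)
    (hgs : ∀ t ∈ Icc a b, gammaC P t ≤ g t ∧ g t ≤ gInf Pinf)
    (hb : f b ≤ g b) : f a ≤ g a := by
  by_contra hlt
  push_neg at hlt
  set S := {x ∈ Icc a b | f x ≤ g x} with hS
  have hbS : b ∈ S := ⟨⟨hab, le_refl b⟩, hb⟩
  have hSne : S.Nonempty := ⟨b, hbS⟩
  have hSbdd : BddBelow S := ⟨a, fun y hy => hy.1.1⟩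
  set x2 := sInf S with hx2def
  have hx2mem : x2 ∈ Icc a b := ⟨le_csInf hSne (fun y hy => hy.1.1), csInf_le hSbdd hbS⟩
  have hSsub : S ⊆ Icc a b := fun y hy => hy.1
  have hψc : ContinuousWithinAt (fun x => g x - f x) S x2 :=
    (((hgc x2 hx2mem).sub (hfc x2 hx2mem))).mono hSsub
  have hx2S : f x2 ≤ g x2 := by
    have hx2cl : x2 ∈ closure S := csInf_mem_closure hSne hSbdd
    have hne : (nhdsWithin x2 S).NeBot := mem_closure_iff_nhdsWithin_neBot.mp hx2cl
    have hev : ∀ᶠ y in nhdsWithin x2 S, 0 ≤ g y - f y := by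
      filter_upwards [self_mem_nhdsWithin] with y hy
      linarith [hy.2]
    have h0 : 0 ≤ g x2 - f x2 := ge_of_tendsto hψc hev
    linarith
  have hax2 : a < x2 := by
    rcases eq_or_lt_of_le hx2mem.1 with h | h
    · exfalso; rw [← h] at hx2S; linarith
    · exact h
  have hnotS : ∀ x ∈ Ico a x2, g x < f x := by
    intro x hx
    by_contra hle
    push_neg at hle
    have hxS : x ∈ S := ⟨⟨hx.1, (lt_of_lt_of_le hx.2 hx2mem.2).le⟩, hle⟩
    exact absurd (csInf_le hSbdd hxS) (not_le.mpr hx.2)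
  have hx2eq : f x2 = g x2 := by
    have hsub : Ico a x2 ⊆ Icc a b := fun y hy =>
      ⟨hy.1, (lt_of_lt_of_le hy.2 hx2mem.2).le⟩
    have hψc2 : ContinuousWithinAt (fun x => g x - f x) (Ico a x2) x2 :=
      (((hgc x2 hx2mem).sub (hfc x2 hx2mem))).mono hsub
    have hcl : x2 ∈ closure (Ico a x2) := by
      rw [closure_Ico (ne_of_lt hax2)]
      exact ⟨hax2.le, le_refl x2⟩
    have hne : (nhdsWithin x2 (Ico a x2)).NeBot := mem_closure_iff_nhdsWithin_neBot.mp hcl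
    have hev : ∀ᶠ y in nhdsWithin x2 (Ico a x2), g y - f y ≤ 0 := by
      filter_upwards [self_mem_nhdsWithin] with y hy
      linarith [hnotS y hy]
    have h0 : g x2 - f x2 ≤ 0 := le_of_tendsto hψc2 hev
    linarith
  have heqon : EqOn f g (Icc a x2) := by
    have hsub : Icc a x2 ⊆ Icc a b := Icc_subset_Icc_right hx2mem.2
    apply uniq_on hs hP1 hP2 hlim ha (hfc.mono hsub) (hgc.mono hsub)
      (fun t ht => hfd t ⟨ht.1, ht.2.trans hx2mem.2⟩)
      (fun t ht => hgd t ⟨ht.1, ht.2.trans hx2mem.2⟩) ?_ ?_ hx2eq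
    · intro t ht
      have ht' : t ∈ Icc a b := ⟨ht.1.le, ht.2.trans hx2mem.2⟩
      exact ⟨(gammaC_mono hP1 hP2 (mem_Ici.mpr ha.le)
        (mem_Ici.mpr (ha.le.trans ht.1.le)) ht.1.le).trans (hfs t ht').1, (hfs t ht').2⟩
    · intro t ht
      have ht' : t ∈ Icc a b := ⟨ht.1.le, ht.2.trans hx2mem.2⟩
      exact ⟨(gammaC_mono hP1 hP2 (mem_Ici.mpr ha.le)
        (mem_Ici.mpr (ha.le.trans ht.1.le)) ht.1.le).trans (hgs t ht').1, (hgs t ht').2⟩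
  have := heqon ⟨le_refl a, hax2.le⟩
  linarith [this]

set_option maxHeartbeats 1000000 in
lemma no_touch (hs : 0 < s) (hP1 : H1 P) (hP2 : H2 P) (hlim : Tendsto P atTop (nhds Pinf))
    {γ : ℝ → ℝ} {x0 : ℝ} (hx0 : 0 < x0)
    (hd : ∀ x ∈ Icc x0 (x0 + 1), HasDerivAt γ (vf s P x (γ x)) x)
    (hlow : ∀ x ∈ Icc x0 (x0 + 1), gammaC P x ≤ γ x)
    (hup : ∀ x ∈ Icc x0 (x0 + 1), γ x ≤ gInf Pinf)
    (heq : γ x0 = gammaC P x0) : False := by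
  have hg0 : 0 < gammaC P x0 := gammaC_pos hP1 hx0
  set M : ℝ := gInf Pinf with hM
  have hMpos : 0 < M := gInf_pos hP1 hP2 hlim
  set A : ℝ := (1 + 2 * M) / (s * x0 * gammaC P x0) with hA
  have hApos : 0 < A := by rw [hA]; positivity
  have hgcmono : ∀ x ∈ Icc x0 (x0 + 1), gammaC P x0 ≤ gammaC P x := fun x hx =>
    gammaC_mono hP1 hP2 (mem_Ici.mpr hx0.le) (mem_Ici.mpr (hx0.le.trans hx.1)) hx.1
  have hγpos : ∀ x ∈ Icc x0 (x0 + 1), 0 < γ x := fun x hx =>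
    lt_of_lt_of_le hg0 ((hgcmono x hx).trans (hlow x hx))
  have hvf_eq : ∀ x ∈ Icc x0 (x0 + 1), vf s P x (γ x) =
      (γ x - gammaC P x) * ((1 + γ x + gammaC P x) / (s * x * γ x)) := by
    intro x hx
    have hx0x : (0:ℝ) ≤ x := hx0.le.trans hx.1
    unfold vf
    rw [vf_numerator hP1 hP2 hx0x]
    ring
  have hvf_nonneg : ∀ x ∈ Icc x0 (x0 + 1), 0 ≤ vf s P x (γ x) := by
    intro x hx
    rw [hvf_eq x hx]
    have h1 : 0 ≤ γ x - gammaC P x := sub_nonneg.mpr (hlow x hx)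
    have h2 : 0 < x := hx0.trans_le hx.1
    have h3 := hγpos x hx
    have h4 : 0 ≤ gammaC P x := gammaC_nonneg hP1 hP2 h2.le
    positivity
  have hcont : ContinuousOn γ (Icc x0 (x0 + 1)) := fun x hx =>
    ((hd x hx).continuousAt).continuousWithinAt
  have hmono : MonotoneOn γ (Icc x0 (x0 + 1)) := by
    apply monotoneOn_of_deriv_nonneg (convex_Icc _ _) hcont
    · rw [interior_Icc]
      exact fun x hx => ((hd x ⟨hx.1.le, hx.2.le⟩).differentiableAt).differentiableWithinAt
    · rw [interior_Icc]
      intro x hx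
      rw [(hd x ⟨hx.1.le, hx.2.le⟩).deriv]
      exact hvf_nonneg x ⟨hx.1.le, hx.2.le⟩
  set w : ℝ → ℝ := fun x => γ x - γ x0 with hw
  have hw_nonneg : ∀ x ∈ Icc x0 (x0 + 1), 0 ≤ w x := by
    intro x hx
    have := hmono ⟨le_refl x0, by linarith⟩ hx hx.1
    simp only [hw]
    linarith
  have hbound : ∀ x ∈ Ico x0 (x0 + 1), ‖vf s P x (γ x)‖ ≤ A * ‖w x‖ + 0 := by
    intro x hx
    have hx' : x ∈ Icc x0 (x0 + 1) := ⟨hx.1, hx.2.le⟩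
    have hxpos : 0 < x := hx0.trans_le hx.1
    have h3 := hγpos x hx'
    have hle1 : γ x - gammaC P x ≤ w x := by
      have := hgcmono x hx'
      simp only [hw]
      linarith [heq]
    have hq : (1 + γ x + gammaC P x) / (s * x * γ x) ≤ A := by
      rw [hA]
      apply div_le_div₀ (by positivity)
      · have := hup x hx'
        have hgcM : gammaC P x < M := gammaC_lt_gInf hP1 hP2 hlim hxpos.le
        linarith
      · positivity
      · have h1 : s * x0 ≤ s * x := by nlinarith [hx.1]
        have h2 : gammaC P x0 ≤ γ x := (hgcmono x hx').trans (hlow x hx')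
        nlinarith [mul_le_mul h1 h2 hg0.le (by positivity : (0:ℝ) ≤ s * x)]
    rw [Real.norm_eq_abs, Real.norm_eq_abs, abs_of_nonneg (hvf_nonneg x hx'),
      abs_of_nonneg (hw_nonneg x hx'), hvf_eq x hx']
    have h1 : 0 ≤ γ x - gammaC P x := sub_nonneg.mpr (hlow x hx')
    have hq0 : 0 ≤ (1 + γ x + gammaC P x) / (s * x * γ x) := by
      have := gammaC_nonneg hP1 hP2 hxpos.le
      positivity
    calc (γ x - gammaC P x) * ((1 + γ x + gammaC P x) / (s * x * γ x))
        ≤ w x * A := mul_le_mul hle1 hq hq0 (hw_nonneg x hx')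
      _ = A * w x + 0 := by ring
  have hgron := norm_le_gronwallBound_of_norm_deriv_right_le (δ := 0) (K := A) (ε := 0)
    (f := w) (f' := fun x => vf s P x (γ x)) (a := x0) (b := x0 + 1)
    (fun x hx => ((hcont x hx).sub continuousWithinAt_const))
    (fun x hx => (((hd x ⟨hx.1, hx.2.le⟩).sub_const (γ x0)).hasDerivWithinAt))
    (by simp [hw]) hbound
  have hfin := hgron (x0 + 1) ⟨by linarith, le_refl _⟩
  rw [gronwallBound_ε0] at hfin
  simp only [zero_mul] at hfin
  have hw1 : w (x0 + 1) = 0 := by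
    have := hw_nonneg (x0 + 1) ⟨by linarith, le_refl _⟩
    rw [Real.norm_eq_abs, abs_of_nonneg this] at hfin
    linarith
  have hγ1 : γ (x0 + 1) = gammaC P x0 := by
    simp only [hw] at hw1
    linarith [heq]
  have hstrict : gammaC P x0 < gammaC P (x0 + 1) :=
    gammaC_strictMono hP1 hP2 (mem_Ici.mpr hx0.le) (mem_Ici.mpr (by linarith)) (by linarith)
  have := hlow (x0 + 1) ⟨by linarith, le_refl _⟩
  rw [hγ1] at this
  linarith

end CompareTouch

section UniqBounded

variable {s : ℝ} {P : ℝ → ℝ}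

set_option maxHeartbeats 1000000 in
lemma uniq_bounded (hs : 0 < s) {γ1 γ2 : ℝ → ℝ} {M1 : ℝ}
    (h1 : IsDSSolution s P γ1 (Ioi 0)) (hb1 : ∀ x > (0:ℝ), γ1 x ≤ M1)
    (h2 : IsDSSolution s P γ2 (Ioi 0))
    {x0 : ℝ} (hx0 : 0 < x0) (hlt : γ2 x0 < γ1 x0) : False := by
  set d : ℝ → ℝ := fun x => γ1 x ^ 2 - γ2 x ^ 2 with hd
  have hpos1 : ∀ x, 0 < x → 0 < γ1 x := fun x hx => h1.1 x (mem_Ioi.mpr hx)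
  have hpos2 : ∀ x, 0 < x → 0 < γ2 x := fun x hx => h2.1 x (mem_Ioi.mpr hx)
  have hdA : ∀ x, 0 < x → HasDerivAt d (2 * (d x + (γ1 x - γ2 x)) / (s * x)) x := by
    intro x hx
    have hγ1 : HasDerivAt γ1 ((γ1 x + γ1 x ^ 2 - P x) / (s * x * γ1 x)) x :=
      (h1.2 x (mem_Ioi.mpr hx)).hasDerivAt (Ioi_mem_nhds hx)
    have hγ2 : HasDerivAt γ2 ((γ2 x + γ2 x ^ 2 - P x) / (s * x * γ2 x)) x :=
      (h2.2 x (mem_Ioi.mpr hx)).hasDerivAt (Ioi_mem_nhds hx)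
    have hsq1 := hγ1.pow 2
    have hsq2 := hγ2.pow 2
    have := hsq1.sub hsq2
    refine this.congr_deriv ?_
    have h10 : γ1 x ≠ 0 := ne_of_gt (hpos1 x hx)
    have h20 : γ2 x ≠ 0 := ne_of_gt (hpos2 x hx)
    have hsx : s * x ≠ 0 := by positivity
    rw [hd]
    simp only
    field_simp
    ring
  have hdc : ∀ x, 0 < x → ContinuousAt d x := fun x hx => (hdA x hx).continuousAt
  have hd0 : 0 < d x0 := by
    have := hpos2 x0 hx0
    rw [hd]
    simp only
    nlinarith
  -- Step 1: d stays positive on [x0, ∞)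
  have step1 : ∀ x, x0 ≤ x → 0 < d x := by
    by_contra hcon
    push_neg at hcon
    obtain ⟨x1, hx1, hx1le⟩ := hcon
    set T := {x ∈ Icc x0 x1 | d x ≤ 0} with hT
    have hx1T : x1 ∈ T := ⟨⟨hx1, le_refl _⟩, hx1le⟩
    have hTne : T.Nonempty := ⟨x1, hx1T⟩
    have hTbdd : BddBelow T := ⟨x0, fun y hy => hy.1.1⟩
    set x2 := sInf T with hx2def
    have hx2mem : x2 ∈ Icc x0 x1 := ⟨le_csInf hTne (fun y hy => hy.1.1), csInf_le hTbdd hx1T⟩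
    have hx2pos : 0 < x2 := hx0.trans_le hx2mem.1
    have hx2T : d x2 ≤ 0 := by
      have hx2cl : x2 ∈ closure T := csInf_mem_closure hTne hTbdd
      have hne : (nhdsWithin x2 T).NeBot := mem_closure_iff_nhdsWithin_neBot.mp hx2cl
      have hev : ∀ᶠ y in nhdsWithin x2 T, d y ≤ 0 := by
        filter_upwards [self_mem_nhdsWithin] with y hy
        exact hy.2
      exact le_of_tendsto ((hdc x2 hx2pos).continuousWithinAt) hev
    have hx0x2 : x0 < x2 := by
      rcases eq_or_lt_of_le hx2mem.1 with h | h
      · exfalso; rw [← h] at hx2T; linarith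
      · exact h
    have hnotT : ∀ x ∈ Ico x0 x2, 0 < d x := by
      intro x hx
      by_contra hle
      push_neg at hle
      have hxT : x ∈ T := ⟨⟨hx.1, (lt_of_lt_of_le hx.2 hx2mem.2).le⟩, hle⟩
      exact absurd (csInf_le hTbdd hxT) (not_le.mpr hx.2)
    have hmono : StrictMonoOn d (Icc x0 x2) := by
      apply strictMonoOn_of_deriv_pos (convex_Icc _ _)
      · exact fun x hx => ((hdc x (hx0.trans_le hx.1)).continuousWithinAt)
      · rw [interior_Icc]
        intro x hx
        have hxpos : 0 < x := hx0.trans hx.1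
        rw [(hdA x hxpos).deriv]
        have hdx : 0 < d x := hnotT x ⟨hx.1.le, hx.2⟩
        have hγlt : γ2 x < γ1 x := by
          have h1p := hpos1 x hxpos
          have h2p := hpos2 x hxpos
          rw [hd] at hdx
          simp only at hdx
          nlinarith
        apply div_pos (by linarith) (by positivity)
    have := hmono ⟨le_refl x0, hx0x2.le⟩ ⟨hx0x2.le, le_refl x2⟩ hx0x2
    linarith
  -- Step 2: exponential growth of d gives contradiction with boundedness
  set p : ℝ := 2 / s with hp
  have hppos : 0 < p := by rw [hp]; positivity
  set φ : ℝ → ℝ := fun x => d x * x ^ (-p) with hφ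
  have hφA : ∀ x, x0 ≤ x → HasDerivAt φ
      (2 * (d x + (γ1 x - γ2 x)) / (s * x) * x ^ (-p) + d x * (-p * x ^ (-p - 1))) x := by
    intro x hx
    have hxpos : 0 < x := hx0.trans_le hx
    exact (hdA x hxpos).mul ((Real.hasDerivAt_rpow_const (Or.inl (ne_of_gt hxpos))))
  have hφmono : MonotoneOn φ (Ici x0) := by
    apply monotoneOn_of_deriv_nonneg (convex_Ici x0)
    · exact fun x hx => ((hφA x hx).continuousAt).continuousWithinAt
    · rw [interior_Ici]
      exact fun x hx => ((hφA x hx.le).differentiableAt).differentiableWithinAt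
    · rw [interior_Ici]
      intro x hx
      have hxpos : 0 < x := hx0.trans hx
      rw [(hφA x hx.le).deriv]
      have hdx : 0 < d x := step1 x hx.le
      have hγlt : γ2 x ≤ γ1 x := by
        have h1p := hpos1 x hxpos
        have h2p := hpos2 x hxpos
        rw [hd] at hdx
        simp only at hdx
        nlinarith
      have hkey : 2 * (d x + (γ1 x - γ2 x)) / (s * x) * x ^ (-p) + d x * (-p * x ^ (-p - 1))
          = (2 * (γ1 x - γ2 x) / (s * x)) * x ^ (-p) := by
        have hrw : x ^ (-p - 1) = x ^ (-p) / x := by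
          rw [show -p - 1 = -p - 1 from rfl, Real.rpow_sub hxpos, Real.rpow_one]
        rw [hrw, hp]
        field_simp
        ring
      rw [hkey]
      have hxp : 0 < x ^ (-p) := Real.rpow_pos_of_pos hxpos _
      have : 0 ≤ 2 * (γ1 x - γ2 x) / (s * x) := by
        apply div_nonneg (by linarith) (by positivity)
      positivity
  set c0 : ℝ := d x0 * x0 ^ (-p) with hc0
  have hc0pos : 0 < c0 := by
    rw [hc0]
    exact mul_pos hd0 (Real.rpow_pos_of_pos hx0 _)
  have hgrowth : ∀ x, x0 ≤ x → c0 * x ^ p ≤ d x := by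
    intro x hx
    have hxpos : 0 < x := hx0.trans_le hx
    have hφle : c0 ≤ φ x := hφmono (mem_Ici.mpr (le_refl x0)) (mem_Ici.mpr hx) hx
    have hxp : 0 < x ^ p := Real.rpow_pos_of_pos hxpos _
    have hcancel : x ^ (-p) * x ^ p = 1 := by
      rw [← Real.rpow_add hxpos]
      simp
    have h1 : c0 * x ^ p ≤ φ x * x ^ p := mul_le_mul_of_nonneg_right hφle hxp.le
    rw [hφ] at h1
    simp only at h1
    calc c0 * x ^ p ≤ d x * x ^ (-p) * x ^ p := h1
      _ = d x * (x ^ (-p) * x ^ p) := by ring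
      _ = d x := by rw [hcancel]; ring
  have hM1pos : 0 < M1 := (hpos1 x0 hx0).trans_le (hb1 x0 hx0)
  have hdbound : ∀ x, x0 ≤ x → d x ≤ M1 ^ 2 := by
    intro x hx
    have hxpos : 0 < x := hx0.trans_le hx
    have h1 : γ1 x ≤ M1 := hb1 x hxpos
    have h2 := hpos1 x hxpos
    have h3 := hpos2 x hxpos
    rw [hd]
    simp only
    nlinarith
  have hblow : Tendsto (fun x => c0 * x ^ p) atTop atTop := by
    exact (tendsto_rpow_atTop hppos).const_mul_atTop hc0pos
  obtain ⟨x, hx1, hx2⟩ := ((hblow.eventually_ge_atTop (M1 ^ 2 + 1)).and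
    (eventually_ge_atTop x0)).exists
  have := hgrowth x hx2
  have := hdbound x hx2
  linarith

end UniqBounded

section Helpers2

variable {s : ℝ} {P : ℝ → ℝ} {Pinf : ℝ}

lemma vf_contOn (hs : 0 < s) (hP1 : H1 P) {a b : ℝ} (ha : 0 < a) {h : ℝ → ℝ}
    (hc : ContinuousOn h (Icc a b)) (hpos : ∀ t ∈ Icc a b, 0 < h t) :
    ContinuousOn (fun t => vf s P t (h t)) (Icc a b) := by
  unfold vf
  apply ContinuousOn.div
  · exact (hc.add (hc.pow 2)).sub
      ((hP_continuousOn hP1).mono (fun t ht => le_trans ha.le ht.1))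
  · exact (continuousOn_const.mul continuousOn_id).mul hc
  · intro t ht
    have h1 := hpos t ht
    have h2 : 0 < t := ha.trans_le ht.1
    positivity

lemma vf_abs_le (hs : 0 < s) (hP1 : H1 P) (hP2 : H2 P) (hlim : Tendsto P atTop (nhds Pinf))
    {a t y : ℝ} (ha : 0 < a) (hat : a ≤ t)
    (hy1 : gammaC P t ≤ y) (hy2 : y ≤ gInf Pinf) :
    |vf s P t y| ≤ (gInf Pinf + gInf Pinf ^ 2 + Pinf) / (s * a * gammaC P a) := by
  have ht0 : 0 < t := ha.trans_le hat
  have hga : 0 < gammaC P a := gammaC_pos hP1 ha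
  have hgat : gammaC P a ≤ gammaC P t :=
    gammaC_mono hP1 hP2 (mem_Ici.mpr ha.le) (mem_Ici.mpr ht0.le) hat
  have hy0 : 0 < y := lt_of_lt_of_le (lt_of_lt_of_le hga hgat) hy1
  have hM : 0 < gInf Pinf := lt_of_lt_of_le hy0 hy2
  have hP0 : 0 ≤ P t := hP_nonneg hP1 hP2 ht0.le
  have hPle : P t ≤ Pinf := hP_le hP2 hlim ht0.le
  have hPinf : 0 < Pinf := hPinf_pos hP1 hP2 hlim
  unfold vf
  rw [abs_div, abs_of_pos (by positivity : (0:ℝ) < s * t * y)]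
  apply div_le_div₀ (by positivity)
  · rw [abs_le]
    constructor <;> nlinarith
  · positivity
  · have h1 : s * a ≤ s * t := by nlinarith
    have h2 : gammaC P a ≤ y := hgat.trans hy1
    nlinarith [mul_le_mul h1 h2 hga.le (by positivity : (0:ℝ) ≤ s * t)]

end Helpers2

set_option maxHeartbeats 2000000 in
theorem stmt_15 (s : ℝ) (hs : 0 < s) (P : ℝ → ℝ) (hP1 : H1 P) (hP2 : H2 P)
    (Pinf : ℝ) (hlim : Filter.Tendsto P Filter.atTop (nhds Pinf)) :
    ∃ γ : ℝ → ℝ, IsDSSolution s P γ (Set.Ioi 0) ∧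
      (∀ x > (0 : ℝ), gammaC P x < γ x ∧ γ x ≤ (Real.sqrt (1 + 4 * Pinf) - 1) / 2) ∧
      ∀ γ' γ'' : ℝ → ℝ,
        IsDSSolution s P γ' (Set.Ioi 0) → (∃ M : ℝ, ∀ x > (0 : ℝ), γ' x ≤ M) →
        IsDSSolution s P γ'' (Set.Ioi 0) → (∃ M : ℝ, ∀ x > (0 : ℝ), γ'' x ≤ M) →
        Set.EqOn γ' γ'' (Set.Ioi 0) := by
  classical
  have hMpos : 0 < gInf Pinf := gInf_pos hP1 hP2 hlim
  have hnp1 : ∀ n : ℕ, (0:ℝ) < (n:ℝ) + 1 := fun n => by positivity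
  set G : ℕ → ℝ → ℝ := fun n => (glob hs hP1 hP2 hlim (hnp1 n)).choose with hG
  have hGspec : ∀ n : ℕ, G n ((n:ℝ)+1) = gammaC P ((n:ℝ)+1) ∧
      (∀ x ∈ Ioc 0 ((n:ℝ)+1), gammaC P x ≤ G n x ∧ G n x ≤ gInf Pinf) ∧
      (∀ x ∈ Ioo 0 ((n:ℝ)+1), HasDerivAt (G n) (vf s P x (G n x)) x) ∧
      (∀ x ∈ Ioc 0 ((n:ℝ)+1), HasDerivWithinAt (G n) (vf s P x (G n x)) (Iic x) x) ∧
      ContinuousOn (G n) (Ioc 0 ((n:ℝ)+1)) :=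
    fun n => (glob hs hP1 hP2 hlim (hnp1 n)).choose_spec
  set g : ℕ → ℝ → ℝ := fun n x =>
    if 0 < x ∧ x ≤ (n:ℝ) + 1 then G n x else gammaC P x with hgdef
  have hg_eq : ∀ n : ℕ, ∀ x : ℝ, 0 < x → x ≤ (n:ℝ)+1 → g n x = G n x := by
    intro n x h1 h2
    rw [hgdef]
    simp only [if_pos (⟨h1, h2⟩ : 0 < x ∧ x ≤ (n:ℝ)+1)]
  have hstrip : ∀ (n : ℕ) (x : ℝ), 0 < x → gammaC P x ≤ g n x ∧ g n x ≤ gInf Pinf := by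
    intro n x hx
    by_cases h : x ≤ (n:ℝ)+1
    · rw [hg_eq n x hx h]
      exact (hGspec n).2.1 x ⟨hx, h⟩
    · rw [hgdef]
      simp only [if_neg (fun hc : 0 < x ∧ x ≤ (n:ℝ)+1 => h hc.2)]
      exact ⟨le_refl _, (gammaC_lt_gInf hP1 hP2 hlim hx.le).le⟩
  have hgpos : ∀ (n : ℕ) (x : ℝ), 0 < x → 0 < g n x := fun n x hx =>
    lt_of_lt_of_le (gammaC_pos hP1 hx) (hstrip n x hx).1
  -- monotonicity in n
  have hmono : ∀ x : ℝ, 0 < x → Monotone (fun n => g n x) := by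
    intro x hx
    intro n m hnm
    simp only
    have hcast : ((n:ℝ)+1) ≤ ((m:ℝ)+1) := by
      have : (n:ℝ) ≤ (m:ℝ) := Nat.cast_le.mpr hnm
      linarith
    by_cases h : x ≤ (n:ℝ)+1
    · -- compare on [x, n+1]
      have hxm : x ≤ (m:ℝ)+1 := h.trans hcast
      rw [hg_eq n x hx h, hg_eq m x hx hxm]
      have hsubn : Icc x ((n:ℝ)+1) ⊆ Ioc 0 ((n:ℝ)+1) := fun t ht => ⟨hx.trans_le ht.1, ht.2⟩
      have hsubm : Icc x ((n:ℝ)+1) ⊆ Ioc 0 ((m:ℝ)+1) := fun t ht =>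
        ⟨hx.trans_le ht.1, ht.2.trans hcast⟩
      apply compare hs hP1 hP2 hlim hx h
        (((hGspec n).2.2.2.2).mono hsubn) (((hGspec m).2.2.2.2).mono hsubm)
        (fun t ht => (hGspec n).2.2.2.1 t ⟨hx.trans ht.1, ht.2⟩)
        (fun t ht => (hGspec m).2.2.2.1 t ⟨hx.trans ht.1, ht.2.trans hcast⟩)
        (fun t ht => (hGspec n).2.1 t (hsubn ht))
        (fun t ht => (hGspec m).2.1 t (hsubm ht))
      -- f (n+1) ≤ g (n+1)
      rw [(hGspec n).1]
      exact ((hGspec m).2.1 ((n:ℝ)+1) ⟨hnp1 n, hcast⟩).1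
    · -- x > n+1 : g n x = gammaC P x ≤ g m x
      rw [hgdef]
      simp only [if_neg (fun hc : 0 < x ∧ x ≤ (n:ℝ)+1 => h hc.2)]
      exact (hstrip m x hx).1
  set Γ : ℝ → ℝ := fun x => ⨆ n, g n x with hΓ
  have hbdd : ∀ x : ℝ, 0 < x → BddAbove (range fun n => g n x) := by
    intro x hx
    exact ⟨gInf Pinf, by rintro y ⟨n, rfl⟩; exact (hstrip n x hx).2⟩
  have htend : ∀ x : ℝ, 0 < x → Tendsto (fun n => g n x) atTop (nhds (Γ x)) :=
    fun x hx => tendsto_atTop_ciSup (hmono x hx) (hbdd x hx)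
  have hΓlow : ∀ x : ℝ, 0 < x → gammaC P x ≤ Γ x := fun x hx =>
    le_trans (hstrip 0 x hx).1 (le_ciSup (hbdd x hx) 0)
  have hΓup : ∀ x : ℝ, 0 < x → Γ x ≤ gInf Pinf := fun x hx =>
    ciSup_le (fun n => (hstrip n x hx).2)
  have hΓpos : ∀ x : ℝ, 0 < x → 0 < Γ x := fun x hx =>
    lt_of_lt_of_le (gammaC_pos hP1 hx) (hΓlow x hx)
  -- integral identity
  have hInt : ∀ a b' : ℝ, 0 < a → a ≤ b' →
      Γ b' = Γ a + ∫ t in a..b', vf s P t (Γ t) := by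
    intro a b' ha hab'
    obtain ⟨N, hN⟩ := exists_nat_gt b'
    have hbN : ∀ k : ℕ, b' ≤ ((k + N : ℕ):ℝ) + 1 := by
      intro k
      have : (N:ℝ) ≤ ((k + N : ℕ):ℝ) := by push_cast; linarith [Nat.cast_nonneg (α := ℝ) k]
      linarith
    have hb'0 : 0 < b' := ha.trans_le hab'
    -- FTC for each k
    have hftc : ∀ k : ℕ, G (k + N) b' - G (k + N) a
        = ∫ t in a..b', vf s P t (G (k + N) t) := by
      intro k
      have hcont : ContinuousOn (fun t => vf s P t (G (k+N) t)) (Icc a b') := by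
        apply vf_contOn hs hP1 ha
        · exact ((hGspec (k+N)).2.2.2.2).mono
            (fun t ht => ⟨ha.trans_le ht.1, ht.2.trans (hbN k)⟩)
        · intro t ht
          exact lt_of_lt_of_le (gammaC_pos hP1 (ha.trans_le ht.1))
            ((hGspec (k+N)).2.1 t ⟨ha.trans_le ht.1, ht.2.trans (hbN k)⟩).1
      rw [← intervalIntegral.integral_eq_sub_of_hasDerivAt]
      · intro t ht
        rw [uIcc_of_le hab'] at ht
        have ht1 : 0 < t := ha.trans_le ht.1
        have ht2 : t < ((k+N:ℕ):ℝ)+1 := lt_of_le_of_lt ht.2 (lt_of_lt_of_le hN (by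
          push_cast; linarith [Nat.cast_nonneg (α := ℝ) k]))
        exact (hGspec (k+N)).2.2.1 t ⟨ht1, ht2⟩
      · exact ContinuousOn.intervalIntegrable (by rwa [uIcc_of_le hab'])
    -- limit of LHS
    have hLHS : Tendsto (fun k => G (k + N) b' - G (k + N) a) atTop
        (nhds (Γ b' - Γ a)) := by
      have h1 : Tendsto (fun k => g (k + N) b') atTop (nhds (Γ b')) :=
        (htend b' hb'0).comp (tendsto_add_atTop_nat N)
      have h2 : Tendsto (fun k => g (k + N) a) atTop (nhds (Γ a)) :=
        (htend a ha).comp (tendsto_add_atTop_nat N)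
      have e1 : (fun k => g (k + N) b') = (fun k => G (k + N) b') := by
        funext k; exact hg_eq (k+N) b' hb'0 (hbN k)
      have e2 : (fun k => g (k + N) a) = (fun k => G (k + N) a) := by
        funext k; exact hg_eq (k+N) a ha (hab'.trans (hbN k))
      rw [e1] at h1
      rw [e2] at h2
      exact h1.sub h2
    -- limit of RHS by dominated convergence
    have hga : 0 < gammaC P a := gammaC_pos hP1 ha
    have hRHS : Tendsto (fun k => ∫ t in a..b', vf s P t (G (k + N) t)) atTop
        (nhds (∫ t in a..b', vf s P t (Γ t))) := by
      apply intervalIntegral.tendsto_integral_filter_of_dominated_convergence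
        (fun _ => (gInf Pinf + gInf Pinf ^ 2 + Pinf) / (s * a * gammaC P a))
      · -- measurability
        filter_upwards with k
        have hcont : ContinuousOn (fun t => vf s P t (G (k+N) t)) (Icc a b') := by
          apply vf_contOn hs hP1 ha
          · exact ((hGspec (k+N)).2.2.2.2).mono
              (fun t ht => ⟨ha.trans_le ht.1, ht.2.trans (hbN k)⟩)
          · intro t ht
            exact lt_of_lt_of_le (gammaC_pos hP1 (ha.trans_le ht.1))
              ((hGspec (k+N)).2.1 t ⟨ha.trans_le ht.1, ht.2.trans (hbN k)⟩).1
        have : Set.uIoc a b' ⊆ Icc a b' := by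
          rw [uIoc_of_le hab']
          exact Ioc_subset_Icc_self
        exact (hcont.mono this).aestronglyMeasurable measurableSet_uIoc
      · filter_upwards with k
        refine Filter.Eventually.of_forall (fun t ht => ?_)
        rw [uIoc_of_le hab'] at ht
        have ht0 : 0 < t := ha.trans ht.1
        have hmem : t ∈ Ioc (0:ℝ) (((k+N:ℕ):ℝ)+1) := ⟨ht0, ht.2.trans (hbN k)⟩
        rw [Real.norm_eq_abs]
        exact vf_abs_le hs hP1 hP2 hlim ha ht.1.le
          ((hGspec (k+N)).2.1 t hmem).1 ((hGspec (k+N)).2.1 t hmem).2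
      · exact intervalIntegrable_const
      · refine Filter.Eventually.of_forall (fun t ht => ?_)
        rw [uIoc_of_le hab'] at ht
        have ht0 : 0 < t := ha.trans ht.1
        have hvcont : ContinuousAt (fun y => vf s P t y) (Γ t) := by
          unfold vf
          apply ContinuousAt.div
          · fun_prop
          · fun_prop
          · have := hΓpos t ht0
            positivity
        have h1 : Tendsto (fun k => g (k + N) t) atTop (nhds (Γ t)) :=
          (htend t ht0).comp (tendsto_add_atTop_nat N)
        have h2 := hvcont.tendsto.comp h1
        refine h2.congr (fun k => ?_)
        simp only [Function.comp]
        rw [hg_eq (k+N) t ht0 (ht.2.trans (hbN k))]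
    have heq : (fun k => ∫ t in a..b', vf s P t (G (k + N) t))
        = (fun k => G (k + N) b' - G (k + N) a) := by
      funext k; rw [hftc k]
    rw [heq] at hRHS
    have := tendsto_nhds_unique hLHS hRHS
    linarith [this]
  -- measurability of the limit integrand on compact subintervals
  have hmeasΓ : ∀ a b' : ℝ, 0 < a → a ≤ b' →
      AEStronglyMeasurable (fun t => vf s P t (Γ t)) (volume.restrict (Ioc a b')) := by
    intro a b' ha hab'
    obtain ⟨N, hN⟩ := exists_nat_gt b'
    have hbN : ∀ k : ℕ, b' ≤ ((k + N : ℕ):ℝ) + 1 := by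
      intro k
      have : (N:ℝ) ≤ ((k + N : ℕ):ℝ) := by push_cast; linarith [Nat.cast_nonneg (α := ℝ) k]
      linarith
    apply aestronglyMeasurable_of_tendsto_ae (u := atTop)
      (f := fun k t => vf s P t (G (k + N) t))
    · intro k
      have hcont : ContinuousOn (fun t => vf s P t (G (k+N) t)) (Icc a b') := by
        apply vf_contOn hs hP1 ha
        · exact ((hGspec (k+N)).2.2.2.2).mono
            (fun t ht => ⟨ha.trans_le ht.1, ht.2.trans (hbN k)⟩)
        · intro t ht
          exact lt_of_lt_of_le (gammaC_pos hP1 (ha.trans_le ht.1))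
            ((hGspec (k+N)).2.1 t ⟨ha.trans_le ht.1, ht.2.trans (hbN k)⟩).1
      exact (hcont.mono Ioc_subset_Icc_self).aestronglyMeasurable measurableSet_Ioc
    · refine (ae_restrict_iff' measurableSet_Ioc).mpr (Filter.Eventually.of_forall ?_)
      intro t ht
      have ht0 : 0 < t := ha.trans ht.1
      have hvcont : ContinuousAt (fun y => vf s P t y) (Γ t) := by
        unfold vf
        apply ContinuousAt.div
        · fun_prop
        · fun_prop
        · have := hΓpos t ht0
          positivity
      have h1 : Tendsto (fun k => g (k + N) t) atTop (nhds (Γ t)) :=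
        (htend t ht0).comp (tendsto_add_atTop_nat N)
      have h2 := hvcont.tendsto.comp h1
      refine h2.congr (fun k => ?_)
      simp only [Function.comp]
      rw [hg_eq (k+N) t ht0 (ht.2.trans (hbN k))]
  -- Γ is a solution: derivative at each point of (0,∞)
  have hΓderiv : ∀ x : ℝ, 0 < x → HasDerivAt Γ (vf s P x (Γ x)) x := by
    intro x hx
    set a : ℝ := x / 2 with ha_def
    set b'' : ℝ := x + 1 with hb_def
    have ha : 0 < a := by rw [ha_def]; positivity
    have hab : a ≤ b'' := by rw [ha_def, hb_def]; linarith
    have haxb : a < x ∧ x < b'' := ⟨by rw [ha_def]; linarith, by rw [hb_def]; linarith⟩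
    set f : ℝ → ℝ := fun t => vf s P t (Γ t) with hf_def
    -- integrability of f on Icc a b''
    have hfbound : ∀ t ∈ Ioc a b'', ‖f t‖ ≤
        (gInf Pinf + gInf Pinf ^ 2 + Pinf) / (s * a * gammaC P a) := by
      intro t ht
      have ht0 : 0 < t := ha.trans ht.1
      rw [Real.norm_eq_abs]
      exact vf_abs_le hs hP1 hP2 hlim ha ht.1.le (hΓlow t ht0) (hΓup t ht0)
    have hintIoc : IntegrableOn f (Ioc a b'') volume := by
      apply Integrable.mono' (g := fun _ => (gInf Pinf + gInf Pinf ^ 2 + Pinf) /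
        (s * a * gammaC P a))
      · exact integrableOn_const measure_Ioc_lt_top.ne
      · exact hmeasΓ a b'' ha hab
      · exact (ae_restrict_iff' measurableSet_Ioc).mpr
          (Filter.Eventually.of_forall hfbound)
    have hintIcc : IntegrableOn f (Icc a b'') volume := by
      show Integrable f (volume.restrict (Icc a b''))
      rw [← MeasureTheory.Measure.restrict_congr_set Ioc_ae_eq_Icc]
      exact hintIoc
    -- Γ equals the primitive on [a, b'']
    have hΓeq : EqOn Γ (fun y => Γ a + ∫ t in a..y, f t) (Icc a b'') := by
      intro y hy
      exact hInt a y ha hy.1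
    -- continuity and derivative of the primitive
    have hprimCont : ContinuousOn (fun y => Γ a + ∫ t in a..y, f t) (Icc a b'') := by
      have := intervalIntegral.continuousOn_primitive_interval
        (a := a) (b := b'') (μ := volume) (f := f) (by rwa [uIcc_of_le hab])
      rw [uIcc_of_le hab] at this
      exact continuousOn_const.add this
    have hΓcont : ContinuousOn Γ (Icc a b'') := hprimCont.congr hΓeq
    have hΓcontAt : ContinuousAt Γ x :=
      hΓcont.continuousAt (Icc_mem_nhds haxb.1 haxb.2)
    have hfcontAt : ContinuousAt f x := by
      rw [hf_def]
      unfold vf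
      apply ContinuousAt.div
      · apply ContinuousAt.sub
        · exact hΓcontAt.add (hΓcontAt.pow 2)
        · exact ((hP_continuousOn hP1).continuousAt
            (mem_of_superset (Ioi_mem_nhds hx) Ioi_subset_Ici_self))
      · exact (continuousAt_const.mul continuousAt_id).mul hΓcontAt
      · have := hΓpos x hx
        positivity
    have hmeasAt : StronglyMeasurableAtFilter f (nhds x) := by
      refine ⟨Ioo a b'', Ioo_mem_nhds haxb.1 haxb.2, ?_⟩
      exact (hmeasΓ a b'' ha hab).mono_measure
        (Measure.restrict_mono Ioo_subset_Ioc_self le_rfl)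
    have hii : IntervalIntegrable f volume a x := by
      rw [intervalIntegrable_iff]
      exact hintIoc.mono_set (by rw [uIoc_of_le haxb.1.le]; exact Ioc_subset_Ioc_right haxb.2.le)
    have hprim : HasDerivAt (fun y => ∫ t in a..y, f t) (f x) x :=
      intervalIntegral.integral_hasDerivAt_right hii hmeasAt hfcontAt
    have hprim' : HasDerivAt (fun y => Γ a + ∫ t in a..y, f t) (f x) x := by
      simpa using hprim.const_add (Γ a)
    apply hprim'.congr_of_eventuallyEq
      (Filter.eventuallyEq_of_mem (Icc_mem_nhds haxb.1 haxb.2) hΓeq)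
  -- strict lower bound
  have hΓstrict : ∀ x : ℝ, 0 < x → gammaC P x < Γ x := by
    intro x hx
    rcases lt_or_eq_of_le (hΓlow x hx) with h | h
    · exact h
    · exfalso
      apply no_touch hs hP1 hP2 hlim hx
        (fun t ht => hΓderiv t (hx.trans_le ht.1))
        (fun t ht => hΓlow t (hx.trans_le ht.1))
        (fun t ht => hΓup t (hx.trans_le ht.1))
      exact h.symm
  refine ⟨Γ, ⟨fun x hx => hΓpos x hx, fun x hx => ?_⟩, fun x hx => ⟨hΓstrict x hx, hΓup x hx⟩, ?_⟩
  · exact (hΓderiv x hx).hasDerivWithinAt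
  · -- uniqueness of bounded positive solutions
    intro γ' γ'' h' hb' h'' hb'' x hx
    obtain ⟨M', hM'⟩ := hb'
    obtain ⟨M'', hM''⟩ := hb''
    by_contra hne
    rcases lt_or_gt_of_ne hne with h | h
    · exact uniq_bounded hs h'' hM'' h' hx h
    · exact uniq_bounded hs h' hM' h'' hx h
end
end

section
/- (Landau pole for non-minimal global solutions.) Let s > 0, let P satisfy H1, and fix x₀ > 0. Let γ be a positive solution of the Dyson–Schwinger ODE on [x₀, ∞), and suppose there exists another positive solution γ̃ on [x₀, ∞) with γ̃(x₀) < γ(x₀). Then ∫_{x₀}^∞ dz / (s·z·γ(z)) < ∞; that is, the scale L* at which the running coupling associated with γ reaches x = ∞ is finite, so γ exhibits a Landau pole. -/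
open Real MeasureTheory Filter Set

noncomputable section

theorem stmt_16 (s : ℝ) (hs : 0 < s) (P : ℝ → ℝ) (hP : H1 P)
    (x₀ : ℝ) (hx₀ : 0 < x₀) (γ : ℝ → ℝ)
    (hγ : IsDSSolution s P γ (Set.Ici x₀))
    (γt : ℝ → ℝ) (hγt : IsDSSolution s P γt (Set.Ici x₀))
    (hlt : γt x₀ < γ x₀) :
    MeasureTheory.IntegrableOn (fun z => 1 / (s * z * γ z)) (Set.Ici x₀) := by
  obtain ⟨hγpos, hγ'⟩ := hγ
  obtain ⟨hγtpos, hγt'⟩ := hγt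
  obtain ⟨hPc, hP0, hPpos⟩ := hP
  have hxpos : ∀ x ∈ Ici x₀, (0:ℝ) < x := fun x hx => lt_of_lt_of_le hx₀ hx
  set h : ℝ → ℝ := fun x => γ x - γt x with hhdef
  set c : ℝ → ℝ := fun x => (1 + P x / (γ x * γt x)) / (s * x) with hcdef
  have hγcont : ContinuousOn γ (Ici x₀) := fun x hx => (hγ' x hx).continuousWithinAt
  have hγtcont : ContinuousOn γt (Ici x₀) := fun x hx => (hγt' x hx).continuousWithinAt
  have hPcont : ContinuousOn P (Ici x₀) :=
    hPc.continuousOn.mono (Ici_subset_Ici.mpr hx₀.le)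
  have hccont : ContinuousOn c (Ici x₀) := by
    apply ContinuousOn.div
    · exact continuousOn_const.add (hPcont.div (hγcont.mul hγtcont)
        (fun x hx => (mul_pos (hγpos x hx) (hγtpos x hx)).ne'))
    · exact continuousOn_const.mul continuousOn_id
    · exact fun x hx => (mul_pos hs (hxpos x hx)).ne'
  -- derivative of h
  have hh' : ∀ x ∈ Ici x₀, HasDerivWithinAt h (c x * h x) (Ici x₀) x := by
    intro x hx
    have hd := (hγ' x hx).sub (hγt' x hx)
    refine hd.congr_deriv ?_
    have h1 : γ x ≠ 0 := (hγpos x hx).ne'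
    have h2 : γt x ≠ 0 := (hγtpos x hx).ne'
    have h3 : s ≠ 0 := hs.ne'
    have h4 : x ≠ 0 := (hxpos x hx).ne'
    show _ = (1 + P x / (γ x * γt x)) / (s * x) * (γ x - γt x)
    field_simp
    ring
  -- the primitive of c
  set F : ℝ → ℝ := fun x => ∫ t in x₀..x, c t with hFdef
  have hcint : ∀ x ∈ Ici x₀, IntervalIntegrable c volume x₀ x := by
    intro x hx
    apply ContinuousOn.intervalIntegrable
    rw [uIcc_of_le hx]
    exact hccont.mono Icc_subset_Ici_self
  have hF' : ∀ x ∈ Ici x₀, HasDerivWithinAt F (c x) (Ici x₀) x := by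
    intro x hx
    rcases eq_or_lt_of_le (mem_Ici.mp hx) with rfl | hlt'
    · exact intervalIntegral.integral_hasDerivWithinAt_right (t := Ioi x₀)
        (hcint x₀ self_mem_Ici)
        ((hccont.mono Ioi_subset_Ici_self).stronglyMeasurableAtFilter_nhdsWithin
          measurableSet_Ioi x₀)
        ((hccont x₀ self_mem_Ici).mono Ioi_subset_Ici_self)
    · have hmem : Ioi x₀ ∈ nhds x := Ioi_mem_nhds hlt'
      have hconat : ContinuousAt c x :=
        (hccont x hx).continuousAt (mem_of_superset hmem Ioi_subset_Ici_self)
      have := intervalIntegral.integral_hasDerivAt_right (hcint x hx)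
        ((hccont.mono Ioi_subset_Ici_self).stronglyMeasurableAtFilter isOpen_Ioi x hlt')
        hconat
      exact this.hasDerivWithinAt
  -- h x = h x₀ * exp (F x)
  have hKconst : ∀ x ∈ Ici x₀, h x * Real.exp (-(F x)) = h x₀ := by
    intro x hx
    have hK' : ∀ y ∈ Ici x₀, HasDerivWithinAt (fun z => h z * Real.exp (-(F z))) 0 (Ici x₀) y := by
      intro y hy
      have := (hh' y hy).mul (((hF' y hy).neg).exp)
      refine this.congr_deriv ?_
      ring
    have hKcont : ContinuousOn (fun z => h z * Real.exp (-(F z))) (Icc x₀ x) :=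
      fun y hy => ((hK' y (Icc_subset_Ici_self hy)).continuousWithinAt).mono Icc_subset_Ici_self
    have := constant_of_has_deriv_right_zero hKcont
      (fun y hy => (hK' y (Ico_subset_Ici_self hy)).mono (Ici_subset_Ici.mpr hy.1))
      x ⟨hx, le_refl _⟩
    simpa [hFdef, intervalIntegral.integral_same] using this
  have hF0 : F x₀ = 0 := intervalIntegral.integral_same
  have hh0 : 0 < h x₀ := sub_pos.mpr hlt
  have hhval : ∀ x ∈ Ici x₀, h x = h x₀ * Real.exp (F x) := by
    intro x hx
    have hk := hKconst x hx
    have : Real.exp (-(F x)) ≠ 0 := (Real.exp_pos _).ne'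
    field_simp [Real.exp_neg] at hk ⊢
    rw [← hk, mul_assoc, ← Real.exp_add]
    simp
  -- lower bound for F
  have hFlb : ∀ x ∈ Ici x₀, (1/s) * Real.log (x / x₀) ≤ F x := by
    intro x hx
    have hint1 : IntervalIntegrable (fun t => (1/s) * t⁻¹) volume x₀ x := by
      apply ContinuousOn.intervalIntegrable
      rw [uIcc_of_le hx]
      exact continuousOn_const.mul
        (continuousOn_inv₀.mono (fun t ht => (hx₀.trans_le ht.1).ne'))
    have hmono : ∀ t ∈ Icc x₀ x, (1/s) * t⁻¹ ≤ c t := by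
      intro t ht
      have htpos : (0:ℝ) < t := hx₀.trans_le ht.1
      have htI : t ∈ Ici x₀ := ht.1
      have hq : 0 ≤ P t / (γ t * γt t) :=
        div_nonneg (hPpos t htpos).le (mul_pos (hγpos t htI) (hγtpos t htI)).le
      have heq : (1:ℝ)/s * t⁻¹ = 1 / (s*t) := by
        field_simp
      rw [heq]
      show (1:ℝ)/(s*t) ≤ (1 + P t/(γ t*γt t))/(s*t)
      gcongr
      linarith
    calc (1/s) * Real.log (x/x₀) = ∫ t in x₀..x, (1/s)*t⁻¹ := by
          rw [intervalIntegral.integral_const_mul, integral_inv_of_pos hx₀ (hxpos x hx)]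
      _ ≤ F x := intervalIntegral.integral_mono_on hx hint1 (hcint x hx) hmono
  -- lower bound for γ
  have hγlb : ∀ x ∈ Ici x₀, h x₀ * (x / x₀) ^ (1/s : ℝ) ≤ γ x := by
    intro x hx
    have hxx : (0:ℝ) < x / x₀ := div_pos (hxpos x hx) hx₀
    have h2 : Real.exp (Real.log (x/x₀) * (1/s)) ≤ Real.exp (F x) := by
      apply Real.exp_le_exp.mpr
      have := hFlb x hx
      linarith [this, mul_comm (Real.log (x/x₀)) (1/s)]
    have h1 : h x₀ * (x/x₀) ^ (1/s:ℝ) ≤ h x := by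
      rw [hhval x hx, Real.rpow_def_of_pos hxx]
      exact mul_le_mul_of_nonneg_left h2 hh0.le
    have h3 : h x ≤ γ x := by
      have := hγtpos x hx
      simp only [hhdef]
      linarith
    exact le_trans h1 h3
  -- conclude
  set C : ℝ := x₀ ^ (1/s:ℝ) / (s * h x₀) with hCdef
  have hCpos : 0 < C := div_pos (Real.rpow_pos_of_pos hx₀ _) (mul_pos hs hh0)
  have hgint : IntegrableOn (fun z => C * z ^ (-(1 + 1/s) : ℝ)) (Ici x₀) := by
    rw [integrableOn_Ici_iff_integrableOn_Ioi]
    have hexp : (-(1 + 1/s) : ℝ) < -1 := by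
      have := one_div_pos.mpr hs
      linarith
    exact (integrableOn_Ioi_rpow_of_lt hexp hx₀).const_mul C
  have hfm : AEStronglyMeasurable (fun z => 1/(s*z*γ z)) (volume.restrict (Ici x₀)) := by
    apply ContinuousOn.aestronglyMeasurable _ measurableSet_Ici
    exact continuousOn_const.div
      ((continuousOn_const.mul continuousOn_id).mul hγcont)
      (fun x hx => (mul_pos (mul_pos hs (hxpos x hx)) (hγpos x hx)).ne')
  apply Integrable.mono hgint hfm
  filter_upwards [ae_restrict_mem measurableSet_Ici] with z hz
  have hzpos : (0:ℝ) < z := hxpos z hz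
  have hγz : 0 < γ z := hγpos z hz
  have hpow : (0:ℝ) < (z/x₀)^(1/s:ℝ) := Real.rpow_pos_of_pos (div_pos hzpos hx₀) _
  have hb : 1/(s*z*γ z) ≤ C * z ^ (-(1+1/s):ℝ) := by
    have hlb := hγlb z hz
    have key : 1/(s*z*γ z) ≤ 1/(s*z*(h x₀ * (z/x₀)^(1/s:ℝ))) := by
      apply one_div_le_one_div_of_le (by positivity)
      exact mul_le_mul_of_nonneg_left hlb (by positivity)
    have heq : 1/(s*z*(h x₀*(z/x₀)^(1/s:ℝ))) = C * z ^ (-(1+1/s):ℝ) := by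
      rw [hCdef, Real.div_rpow hzpos.le hx₀.le, Real.rpow_neg hzpos.le,
        Real.rpow_add hzpos, Real.rpow_one]
      have hz1 : (0:ℝ) < (z : ℝ)^(1/s:ℝ) := Real.rpow_pos_of_pos hzpos _
      have hz2 : (0:ℝ) < (x₀:ℝ)^(1/s:ℝ) := Real.rpow_pos_of_pos hx₀ _
      rw [div_mul_eq_mul_div, div_eq_div_iff (by positivity) (by positivity)]
      field_simp
    exact heq ▸ key
  have hz3 : (0:ℝ) < z ^ (-(1+1/s):ℝ) := Real.rpow_pos_of_pos hzpos _
  rw [Real.norm_eq_abs, Real.norm_eq_abs, abs_of_nonneg (by positivity),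
    abs_of_nonneg (by positivity)]
  exact hb
end
end

section
/- Consider the Dyson–Schwinger ODE with P(x) = x and s = 2, i.e. γ'(x) = (γ(x) + γ(x)² − x) / (2·x·γ(x)). Fix x₀ > 0 and let γ be a positive solution on an interval [x₀, b). Then b ≤ x₀·exp( (1 + γ(x₀))² / x₀ ) < ∞; in particular, for P(x) = x and s = 2 there are no positive solutions on all of [x₀, ∞). -/
open Real MeasureTheory Filter Set

noncomputable section

/-- Key estimate: any positive solution on `[x₀, b)` forces
`b ≤ x₀ · exp((1 + γ x₀)² / x₀)`. -/
lemma ds_key_bound (x₀ b : ℝ) (hx₀ : 0 < x₀) (γ : ℝ → ℝ)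
    (hγ : IsDSSolution 2 (fun x => x) γ (Set.Ico x₀ b)) :
    b ≤ x₀ * Real.exp ((1 + γ x₀) ^ 2 / x₀) := by
  have hC : x₀ ≤ x₀ * Real.exp ((1 + γ x₀) ^ 2 / x₀) := by
    nlinarith [Real.one_le_exp (div_nonneg (sq_nonneg (1 + γ x₀)) hx₀.le),
      Real.exp_pos ((1 + γ x₀) ^ 2 / x₀)]
  rcases le_or_gt b x₀ with hb | hb
  · linarith
  obtain ⟨hpos, hder⟩ := hγ
  set I := Set.Ico x₀ b with hI
  set F : ℝ → ℝ := fun x => (1 + γ x) ^ 2 / x + Real.log x with hF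
  -- derivative of the Lyapunov function F within I
  have hderF : ∀ x ∈ I, HasDerivWithinAt F (-(1 / (x * γ x))) I x := by
    intro x hx
    have hxpos : 0 < x := lt_of_lt_of_le hx₀ hx.1
    have hgx : 0 < γ x := hpos x hx
    have h1 := ((hasDerivWithinAt_const x I (1:ℝ)).add (hder x hx)).pow 2
    have h2 := h1.div (hasDerivWithinAt_id x I) hxpos.ne'
    have h3 := h2.add ((Real.hasDerivAt_log hxpos.ne').hasDerivWithinAt)
    refine h3.congr_deriv ?_
    simp only [Pi.add_apply, Pi.pow_apply, id, Nat.cast_ofNat]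
    field_simp
    ring
  have hanti : AntitoneOn F I := by
    apply antitoneOn_of_hasDerivWithinAt_nonpos (convex_Ico x₀ b)
      (fun x hx => (hderF x hx).continuousWithinAt)
      (fun x hx => (hderF x (interior_subset hx)).mono interior_subset)
    intro x hx
    rw [interior_Ico] at hx
    have hxpos : 0 < x := lt_trans hx₀ hx.1
    have hgx : 0 < γ x := hpos x ⟨hx.1.le, hx.2⟩
    rw [neg_nonpos]
    positivity
  have hx₀I : x₀ ∈ I := ⟨le_refl _, hb⟩
  by_contra hcon
  push_neg at hcon
  obtain ⟨a, ha1, ha2⟩ : ∃ a, max x₀ (x₀ * Real.exp ((1 + γ x₀) ^ 2 / x₀)) < a ∧ a < b := by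
    refine exists_between (max_lt hb hcon)
  have haI : a ∈ I := ⟨(le_max_left _ _).trans ha1.le, ha2⟩
  have hFle : F a ≤ F x₀ := hanti hx₀I haI (hx₀I.1.trans haI.1)
  have hapos : 0 < a := lt_of_lt_of_le hx₀ haI.1
  have h1 : Real.log a ≤ (1 + γ x₀) ^ 2 / x₀ + Real.log x₀ := by
    have : 0 ≤ (1 + γ a) ^ 2 / a := div_nonneg (sq_nonneg _) hapos.le
    simp only [hF] at hFle
    linarith
  have : a ≤ x₀ * Real.exp ((1 + γ x₀) ^ 2 / x₀) := by
    calc a = Real.exp (Real.log a) := (Real.exp_log hapos).symm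
    _ ≤ Real.exp ((1 + γ x₀) ^ 2 / x₀ + Real.log x₀) := Real.exp_le_exp.2 h1
    _ = x₀ * Real.exp ((1 + γ x₀) ^ 2 / x₀) := by
        rw [Real.exp_add, Real.exp_log hx₀]; ring
  linarith [le_max_right x₀ (x₀ * Real.exp ((1 + γ x₀) ^ 2 / x₀))]

theorem stmt_19 (x₀ b : ℝ) (hx₀ : 0 < x₀) (γ : ℝ → ℝ)
    (hγ : IsDSSolution 2 (fun x => x) γ (Set.Ico x₀ b)) :
    b ≤ x₀ * Real.exp ((1 + γ x₀) ^ 2 / x₀) ∧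
    ¬ ∃ γ' : ℝ → ℝ, IsDSSolution 2 (fun x => x) γ' (Set.Ici x₀) := by
  refine ⟨ds_key_bound x₀ b hx₀ γ hγ, ?_⟩
  rintro ⟨γ', hpos', hder'⟩
  set b' := x₀ * Real.exp ((1 + γ' x₀) ^ 2 / x₀) + 1 with hb'
  have hsub : Set.Ico x₀ b' ⊆ Set.Ici x₀ := fun x hx => hx.1
  have hsol : IsDSSolution 2 (fun x => x) γ' (Set.Ico x₀ b') :=
    ⟨fun x hx => hpos' x (hsub hx),
     fun x hx => (hder' x (hsub hx)).mono hsub⟩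
  have := ds_key_bound x₀ b' hx₀ γ' hsol
  simp only [hb'] at this
  linarith
end
end
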